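/- Let X, Y, Z be random variables on a common probability space with values in measurable spaces, such that X is conditionally independent of Z given Y, and Y is conditionally independent of Z given X. If the joint law of (X,Y) has a strictly positive density with respect to some product probability measure μ⊗ν, then the pair (X,Y) is independent of Z. -/

import Mathlib

open MeasureTheory ProbabilityTheory
open scoped ENNReal

section DoobDynkin

variable {Ω 𝒴 : Type*}

/-- Doob–Dynkin factorization for `ℝ≥0∞`-valued functions. -/
lemma exists_factor_ennreal [m𝒴 : MeasurableSpace 𝒴] (Y : Ω → 𝒴) :
    ∀ ⦃g : Ω → ℝ≥0∞⦄, Measurable[m𝒴.comap Y] g →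
      ∃ v : 𝒴 → ℝ≥0∞, Measurable v ∧ g = fun ω => v (Y ω) := by
  apply @Measurable.ennreal_induction Ω (m𝒴.comap Y)
    (fun g => ∃ v : 𝒴 → ℝ≥0∞, Measurable v ∧ g = fun ω => v (Y ω))
  · rintro c s ⟨t, ht, rfl⟩
    refine ⟨t.indicator fun _ => c, measurable_const.indicator ht, ?_⟩
    funext ω
    by_cases hω : Y ω ∈ t <;> simp [Set.indicator, hω, Set.mem_preimage]
  · rintro g₁ g₂ - - - ⟨v₁, hv₁, rfl⟩ ⟨v₂, hv₂, rfl⟩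
    exact ⟨v₁ + v₂, hv₁.add hv₂, rfl⟩
  · intro gs hmeas hmono hP
    choose v hv hgv using hP
    refine ⟨fun y => ⨆ n, v n y, Measurable.iSup hv, ?_⟩
    funext ω
    simp only [hgv]

/-- Doob–Dynkin factorization for real-valued functions. -/
lemma exists_factor_real [m𝒴 : MeasurableSpace 𝒴] (Y : Ω → 𝒴) {g : Ω → ℝ}
    (hg : Measurable[m𝒴.comap Y] g) :
    ∃ v : 𝒴 → ℝ, Measurable v ∧ g = fun ω => v (Y ω) := by
  obtain ⟨v₁, hv₁, h₁⟩ := exists_factor_ennreal Y hg.ennreal_ofReal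
  obtain ⟨v₂, hv₂, h₂⟩ := exists_factor_ennreal Y hg.neg.ennreal_ofReal
  refine ⟨fun y => (v₁ y).toReal - (v₂ y).toReal,
    hv₁.ennreal_toReal.sub hv₂.ennreal_toReal, ?_⟩
  funext ω
  have e₁ : v₁ (Y ω) = ENNReal.ofReal (g ω) := (congrFun h₁ ω).symm
  have e₂ : v₂ (Y ω) = ENNReal.ofReal (-g ω) := (congrFun h₂ ω).symm
  show g ω = (v₁ (Y ω)).toReal - (v₂ (Y ω)).toReal
  rw [e₁, e₂, ENNReal.toReal_ofReal', ENNReal.toReal_ofReal',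
    max_zero_sub_max_neg_zero_eq_self]

end DoobDynkin

section Comap

variable {Ω 𝒳 𝒴 : Type*}

lemma comap_pair_eq_sup [m𝒳 : MeasurableSpace 𝒳] [m𝒴 : MeasurableSpace 𝒴]
    (X : Ω → 𝒳) (Y : Ω → 𝒴) :
    MeasurableSpace.comap (fun ω => (X ω, Y ω)) inferInstance = m𝒳.comap X ⊔ m𝒴.comap Y := by
  have : (inferInstance : MeasurableSpace (𝒳 × 𝒴))
      = m𝒳.comap Prod.fst ⊔ m𝒴.comap Prod.snd := rfl
  rw [this, MeasurableSpace.comap_sup, MeasurableSpace.comap_comp, MeasurableSpace.comap_comp]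
  rfl

lemma comap_pair_comm [m𝒳 : MeasurableSpace 𝒳] [m𝒴 : MeasurableSpace 𝒴]
    (X : Ω → 𝒳) (Y : Ω → 𝒴) :
    MeasurableSpace.comap (fun ω => (Y ω, X ω)) inferInstance
      = MeasurableSpace.comap (fun ω => (X ω, Y ω)) inferInstance := by
  rw [comap_pair_eq_sup, comap_pair_eq_sup, sup_comm]

end Comap

section StepA

variable {Ω 𝒳 𝒴 : Type*}

/-- If for all measurable `s`, the conditional expectation (given `σ(Y)`) of the indicator of
`X ⁻¹' s ∩ ζ` factors as a product, then the conditional expectation of the indicator of `ζ`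
given `σ(X, Y)` equals the one given `σ(Y)`. -/
lemma stepA {mΩ : MeasurableSpace Ω} [MeasurableSpace 𝒳] [MeasurableSpace 𝒴]
    (P : Measure Ω) [IsProbabilityMeasure P]
    {X : Ω → 𝒳} {Y : Ω → 𝒴} (hX : Measurable X) (hY : Measurable Y)
    {ζ : Set Ω} (hζ : MeasurableSet ζ)
    (h : ∀ s : Set 𝒳, MeasurableSet s →
      P[(X ⁻¹' s ∩ ζ).indicator (fun _ => (1:ℝ)) | MeasurableSpace.comap Y inferInstance]
        =ᵐ[P] fun ω =>
          (P[(X ⁻¹' s).indicator (fun _ => (1:ℝ)) | MeasurableSpace.comap Y inferInstance]) ω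
          * (P[ζ.indicator (fun _ => (1:ℝ)) | MeasurableSpace.comap Y inferInstance]) ω) :
    P[ζ.indicator (fun _ => (1:ℝ)) | MeasurableSpace.comap (fun ω => (X ω, Y ω)) inferInstance]
      =ᵐ[P] P[ζ.indicator (fun _ => (1:ℝ)) | MeasurableSpace.comap Y inferInstance] := by
  have hmY : (MeasurableSpace.comap Y inferInstance) ≤ mΩ := hY.comap_le
  have hmXY : (MeasurableSpace.comap (fun ω => (X ω, Y ω)) inferInstance) ≤ mΩ := (hX.prodMk hY).comap_le
  have hYle : MeasurableSpace.comap Y inferInstance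
      ≤ MeasurableSpace.comap (fun ω => (X ω, Y ω)) inferInstance := by
    rw [comap_pair_eq_sup]; exact le_sup_right
  haveI : IsFiniteMeasure (P.trim hmY) := isFiniteMeasure_trim hmY
  haveI : IsFiniteMeasure (P.trim hmXY) := isFiniteMeasure_trim hmXY
  set I : Ω → ℝ := ζ.indicator (fun _ => (1:ℝ)) with hIdef
  have hI_int : Integrable I P := (integrable_const (1:ℝ)).indicator hζ
  set V : Ω → ℝ := P[I | (MeasurableSpace.comap Y inferInstance)] with hVdef
  have hV_int : Integrable V P := integrable_condExp
  have hV_nn : 0 ≤ᵐ[P] V :=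
    condExp_nonneg (Filter.Eventually.of_forall fun ω =>
      Set.indicator_nonneg (fun _ _ => zero_le_one) ω)
  -- key rectangle computation
  have key : ∀ s t : Set _, MeasurableSet s → MeasurableSet t →
      ∫ x in X ⁻¹' s ∩ Y ⁻¹' t, V x ∂P = (P ((X ⁻¹' s ∩ Y ⁻¹' t) ∩ ζ)).toReal := by
    intro s t hs ht
    have hYt : MeasurableSet[(MeasurableSpace.comap Y inferInstance)] (Y ⁻¹' t) := ⟨t, ht, rfl⟩
    have hXs : MeasurableSet (X ⁻¹' s) := hX hs
    have hind_int : Integrable ((X ⁻¹' s).indicator V) P := hV_int.indicator hXs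
    have l1 : ∫ x in X ⁻¹' s ∩ Y ⁻¹' t, V x ∂P
        = ∫ x in Y ⁻¹' t, (X ⁻¹' s).indicator V x ∂P := by
      rw [setIntegral_indicator hXs, Set.inter_comm]
    have l2 : ∫ x in Y ⁻¹' t, (X ⁻¹' s).indicator V x ∂P
        = ∫ x in Y ⁻¹' t, (P[(X ⁻¹' s).indicator V | (MeasurableSpace.comap Y inferInstance)]) x ∂P :=
      (setIntegral_condExp hmY hind_int hYt).symm
    have heq : (X ⁻¹' s).indicator V = V * (X ⁻¹' s).indicator (fun _ => (1:ℝ)) := by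
      funext ω; by_cases hω : ω ∈ X ⁻¹' s <;> simp [hω]
    have pull : P[(X ⁻¹' s).indicator V | (MeasurableSpace.comap Y inferInstance)]
        =ᵐ[P] V * P[(X ⁻¹' s).indicator (fun _ => (1:ℝ)) | (MeasurableSpace.comap Y inferInstance)] := by
      rw [heq]
      exact condExp_mul_of_stronglyMeasurable_left stronglyMeasurable_condExp (heq ▸ hind_int)
        ((integrable_const (1:ℝ)).indicator hXs)
    have r1 : (P ((X ⁻¹' s ∩ Y ⁻¹' t) ∩ ζ)).toReal
        = ∫ x in Y ⁻¹' t, (X ⁻¹' s ∩ ζ).indicator (fun _ => (1:ℝ)) x ∂P := by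
      rw [setIntegral_indicator (hXs.inter hζ), setIntegral_const, smul_eq_mul, mul_one]
      have hset : Y ⁻¹' t ∩ (X ⁻¹' s ∩ ζ) = (X ⁻¹' s ∩ Y ⁻¹' t) ∩ ζ := by
        ext ω
        simp only [Set.mem_inter_iff, Set.mem_preimage]
        tauto
      rw [hset, measureReal_def]
    have r2 : ∫ x in Y ⁻¹' t, (X ⁻¹' s ∩ ζ).indicator (fun _ => (1:ℝ)) x ∂P
        = ∫ x in Y ⁻¹' t, (P[(X ⁻¹' s ∩ ζ).indicator (fun _ => (1:ℝ)) | (MeasurableSpace.comap Y inferInstance)]) x ∂P :=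
      (setIntegral_condExp hmY ((integrable_const (1:ℝ)).indicator (hXs.inter hζ)) hYt).symm
    rw [l1, l2, r1, r2]
    refine integral_congr_ae (ae_restrict_of_ae ?_)
    filter_upwards [pull, h s hs] with ω h1 h2
    rw [h1, h2]
    simp [mul_comm]
  -- the two finite measures
  set ρ₁ : Measure Ω := P.withDensity (fun ω => ENNReal.ofReal (V ω)) with hρ₁def
  set ρ₂ : Measure Ω := P.restrict ζ with hρ₂def
  have hρ₁app : ∀ {T : Set Ω}, MeasurableSet T → ρ₁ T = ENNReal.ofReal (∫ x in T, V x ∂P) := by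
    intro T hT
    rw [hρ₁def, withDensity_apply _ hT,
      ← ofReal_integral_eq_lintegral_ofReal hV_int.integrableOn (ae_restrict_of_ae hV_nn)]
  haveI : IsFiniteMeasure ρ₁ := by
    constructor
    rw [hρ₁app MeasurableSet.univ]
    exact ENNReal.ofReal_lt_top
  have hC : MeasurableSpace.comap (fun ω => (X ω, Y ω)) inferInstance
      = MeasurableSpace.generateFrom
      {S : Set Ω | ∃ s t : Set _, MeasurableSet s ∧ MeasurableSet t ∧ S = X ⁻¹' s ∩ Y ⁻¹' t} := by
    rw [← generateFrom_prod, MeasurableSpace.comap_generateFrom]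
    congr 1
    ext S
    constructor
    · rintro ⟨-, ⟨s, hs, t, ht, rfl⟩, rfl⟩
      exact ⟨s, t, hs, ht, (Set.mk_preimage_prod X Y).symm⟩
    · rintro ⟨s, t, hs, ht, rfl⟩
      exact ⟨s ×ˢ t, ⟨s, hs, t, ht, rfl⟩, Set.mk_preimage_prod X Y⟩
  have hPi : IsPiSystem
      {S : Set Ω | ∃ s t : Set _, MeasurableSet s ∧ MeasurableSet t ∧ S = X ⁻¹' s ∩ Y ⁻¹' t} := by
    rintro S ⟨s, t, hs, ht, rfl⟩ S' ⟨s', t', hs', ht', rfl⟩ -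
    refine ⟨s ∩ s', t ∩ t', hs.inter hs', ht.inter ht', ?_⟩
    ext ω
    simp only [Set.mem_inter_iff, Set.mem_preimage]
    tauto
  have hrect_m : ∀ {s : Set 𝒳} {t : Set 𝒴}, MeasurableSet s → MeasurableSet t →
      MeasurableSet[(MeasurableSpace.comap (fun ω => (X ω, Y ω)) inferInstance)] (X ⁻¹' s ∩ Y ⁻¹' t) := by
    intro s t hs ht
    exact ⟨s ×ˢ t, (hs.prod ht), Set.mk_preimage_prod X Y⟩
  have htrim : ρ₁.trim hmXY = ρ₂.trim hmXY := by
    haveI : IsFiniteMeasure (ρ₁.trim hmXY) := isFiniteMeasure_trim hmXY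
    refine ext_of_generate_finite _ hC hPi ?_ ?_
    · rintro S ⟨s, t, hs, ht, rfl⟩
      have hm : MeasurableSet[(MeasurableSpace.comap (fun ω => (X ω, Y ω)) inferInstance)] (X ⁻¹' s ∩ Y ⁻¹' t) := hrect_m hs ht
      have hR : MeasurableSet (X ⁻¹' s ∩ Y ⁻¹' t) := (hX hs).inter (hY ht)
      rw [trim_measurableSet_eq hmXY hm, trim_measurableSet_eq hmXY hm,
        hρ₁app hR, key s t hs ht, hρ₂def, Measure.restrict_apply hR,
        ENNReal.ofReal_toReal (measure_ne_top P _)]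
    · rw [trim_measurableSet_eq hmXY MeasurableSet.univ,
        trim_measurableSet_eq hmXY MeasurableSet.univ,
        hρ₁app MeasurableSet.univ, hρ₂def, Measure.restrict_apply MeasurableSet.univ,
        Set.univ_inter, Measure.restrict_univ]
      rw [show ∫ x, V x ∂P = ∫ x, I x ∂P from integral_condExp hmY, hIdef,
        integral_indicator_const (1:ℝ) hζ, smul_eq_mul, mul_one, measureReal_def,
        ENNReal.ofReal_toReal (measure_ne_top P _)]
  -- conclude via characterization of condexp
  refine (ae_eq_condExp_of_forall_setIntegral_eq hmXY hI_int
    (fun S _ _ => hV_int.integrableOn) (fun S hS _ => ?_)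
    (stronglyMeasurable_condExp.mono hYle).aestronglyMeasurable).symm
  have hSmeas : MeasurableSet S := hmXY _ hS
  have hρeq : ρ₁ S = ρ₂ S := by
    rw [← trim_measurableSet_eq hmXY hS, ← trim_measurableSet_eq hmXY hS, htrim]
  rw [hρ₁app hSmeas, hρ₂def, Measure.restrict_apply hSmeas] at hρeq
  have hVS_nn : 0 ≤ ∫ x in S, V x ∂P :=
    setIntegral_nonneg_ae hSmeas (hV_nn.mono fun ω hω _ => hω)
  have : ∫ x in S, V x ∂P = (P (S ∩ ζ)).toReal := by
    rw [← ENNReal.toReal_ofReal hVS_nn, hρeq]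
  rw [this, hIdef, setIntegral_indicator hζ, setIntegral_const, smul_eq_mul, mul_one, measureReal_def]

end StepA

/-- If `X` is conditionally independent of `Z` given `Y`, and `Y` is conditionally
independent of `Z` given `X`, and the joint law of `(X,Y)` has a strictly positive
density with respect to some product probability measure `μ ⊗ ν`, then the pair
`(X,Y)` is independent of `Z`. -/
theorem indep_of_double_condIndep
    {Ω 𝒳 𝒴 𝒵 : Type*} {mΩ : MeasurableSpace Ω}
    [StandardBorelSpace Ω] [Nonempty Ω]
    [MeasurableSpace 𝒳] [MeasurableSpace 𝒴] [MeasurableSpace 𝒵]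
    (P : Measure Ω) [IsProbabilityMeasure P]
    (X : Ω → 𝒳) (Y : Ω → 𝒴) (Z : Ω → 𝒵)
    (hX : Measurable X) (hY : Measurable Y) (hZ : Measurable Z)
    (hXZ : CondIndepFun (MeasurableSpace.comap Y inferInstance) hY.comap_le X Z P)
    (hYZ : CondIndepFun (MeasurableSpace.comap X inferInstance) hX.comap_le Y Z P)
    (μ : Measure 𝒳) (ν : Measure 𝒴)
    [IsProbabilityMeasure μ] [IsProbabilityMeasure ν]
    (f : 𝒳 × 𝒴 → ℝ≥0∞) (hf : Measurable f)
    (hfpos : ∀ᵐ xy ∂(μ.prod ν), 0 < f xy)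
    (hdens : Measure.map (fun ω => (X ω, Y ω)) P = (μ.prod ν).withDensity f) :
    IndepFun (fun ω => (X ω, Y ω)) Z P := by
  rw [indepFun_iff_measure_inter_preimage_eq_mul]
  intro s B hs hB
  have hmXY : (MeasurableSpace.comap (fun ω => (X ω, Y ω)) inferInstance) ≤ mΩ := (hX.prodMk hY).comap_le
  haveI : IsFiniteMeasure (P.trim hmXY) := isFiniteMeasure_trim hmXY
  set ζ : Set Ω := Z ⁻¹' B with hζdef
  have hζ : MeasurableSet ζ := hZ hB
  set I : Ω → ℝ := ζ.indicator (fun _ => (1:ℝ)) with hIdef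
  have hI_int : Integrable I P := (integrable_const (1:ℝ)).indicator hζ
  set W : Ω → ℝ := P[I | (MeasurableSpace.comap (fun ω => (X ω, Y ω)) inferInstance)] with hWdef
  set V : Ω → ℝ := P[I | (MeasurableSpace.comap Y inferInstance)] with hVdef
  set U : Ω → ℝ := P[I | (MeasurableSpace.comap X inferInstance)] with hUdef
  -- Step A for both conditionings
  have hWV : W =ᵐ[P] V := by
    have hiff := (condIndepFun_iff_condExp_inter_preimage_eq_mul (m' := (MeasurableSpace.comap Y inferInstance)) (hm' := hY.comap_le)
      (μ := P) hX hZ).mp hXZ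
    exact stepA P hX hY hζ (fun s' hs' => hiff s' B hs' hB)
  have hWU : W =ᵐ[P] U := by
    have hiff := (condIndepFun_iff_condExp_inter_preimage_eq_mul (m' := (MeasurableSpace.comap X inferInstance)) (hm' := hX.comap_le)
      (μ := P) hY hZ).mp hYZ
    have h := stepA P hY hX hζ (fun t' ht' => hiff t' B ht' hB)
    rwa [comap_pair_comm X Y] at h
  -- factor V and U through Y and X
  have hV_meas : Measurable[(MeasurableSpace.comap Y inferInstance)] V := stronglyMeasurable_condExp.measurable
  have hU_meas : Measurable[(MeasurableSpace.comap X inferInstance)] U := stronglyMeasurable_condExp.measurable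
  obtain ⟨v, hv, hVv⟩ := exists_factor_real Y hV_meas
  obtain ⟨u, hu, hUu⟩ := exists_factor_real X hU_meas
  -- u ∘ X =ᵐ v ∘ Y
  have huv : (fun ω => u (X ω)) =ᵐ[P] fun ω => v (Y ω) := by
    rw [← hUu, ← hVv]; exact hWU.symm.trans hWV
  -- push to the product space
  set D : Set (𝒳 × 𝒴) := {p | u p.1 = v p.2} with hDdef
  have hD : MeasurableSet D :=
    measurableSet_eq_fun (hu.comp measurable_fst) (hv.comp measurable_snd)
  have hmap0 : (Measure.map (fun ω => (X ω, Y ω)) P) Dᶜ = 0 := by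
    rw [Measure.map_apply (hX.prodMk hY) hD.compl]
    exact ae_iff.mp huv
  have hprod0 : (μ.prod ν) Dᶜ = 0 := by
    have h0 : ((μ.prod ν).withDensity f) Dᶜ = 0 := by rw [← hdens]; exact hmap0
    rw [withDensity_apply f hD.compl] at h0
    have hf0 : f =ᵐ[(μ.prod ν).restrict Dᶜ] 0 := (lintegral_eq_zero_iff hf).mp h0
    have hppos : ∀ᵐ p ∂(μ.prod ν).restrict Dᶜ, 0 < f p := ae_restrict_of_ae hfpos
    have hfalse : ∀ᵐ p ∂(μ.prod ν).restrict Dᶜ, False := by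
      filter_upwards [hf0, hppos] with p h1 h2
      rw [h1] at h2; exact lt_irrefl 0 h2
    have := ae_iff.mp hfalse
    simpa [Measure.restrict_apply_univ] using this
  have haeD : ∀ᵐ p ∂(μ.prod ν), u p.1 = v p.2 := by
    rw [ae_iff]; exact hprod0
  have hxy := Measure.ae_ae_of_ae_prod haeD
  haveI : (ae μ).NeBot := IsProbabilityMeasure.ae_neBot
  obtain ⟨x₀, hx₀⟩ := hxy.exists
  set c : ℝ := u x₀ with hcdef
  have hvc : ∀ᵐ y ∂ν, v y = c := by filter_upwards [hx₀] with y hy; exact hy.symm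
  -- law of Y is absolutely continuous w.r.t. ν
  have hlawY : Measure.map Y P ≪ ν := by
    have h1 : Measure.map Y P = Measure.map Prod.snd (Measure.map (fun ω => (X ω, Y ω)) P) := by
      rw [Measure.map_map measurable_snd (hX.prodMk hY)]; rfl
    rw [h1, hdens]
    have h2 : Measure.map Prod.snd ((μ.prod ν).withDensity f)
        ≪ Measure.map Prod.snd (μ.prod ν) :=
      (withDensity_absolutelyContinuous _ f).map measurable_snd
    rwa [Measure.map_snd_prod, measure_univ, one_smul] at h2
  have hvYc : (fun ω => v (Y ω)) =ᵐ[P] fun _ => c := by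
    have hEm : MeasurableSet {y | ¬ v y = c} :=
      (measurableSet_eq_fun hv measurable_const).compl
    have h3 : Measure.map Y P {y | ¬ v y = c} = 0 := hlawY (ae_iff.mp hvc)
    rw [Measure.map_apply hY hEm] at h3
    exact ae_iff.mpr h3
  have hWc : W =ᵐ[P] fun _ => c := hWV.trans (hVv ▸ hvYc)
  -- identify the constant
  have hc : (P ζ).toReal = c := by
    have h4 : ∫ ω, W ω ∂P = ∫ ω, I ω ∂P := integral_condExp hmXY
    rw [integral_congr_ae hWc, integral_const, hIdef,
      integral_indicator_const (1:ℝ) hζ, measureReal_def, measure_univ] at h4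
    simpa [measureReal_def] using h4.symm
  -- final computation
  set S : Set Ω := (fun ω => (X ω, Y ω)) ⁻¹' s with hSdef
  have hSm : MeasurableSet[(MeasurableSpace.comap (fun ω => (X ω, Y ω)) inferInstance)] S := ⟨s, hs, rfl⟩
  have hS : MeasurableSet S := hmXY _ hSm
  have e1 : ∫ x in S, I x ∂P = (P (S ∩ ζ)).toReal := by
    rw [hIdef, setIntegral_indicator hζ, setIntegral_const, smul_eq_mul, mul_one, measureReal_def]
  have e2 : ∫ x in S, W x ∂P = ∫ x in S, I x ∂P := setIntegral_condExp hmXY hI_int hSm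
  have e3 : ∫ x in S, W x ∂P = (P S).toReal * c := by
    rw [integral_congr_ae (ae_restrict_of_ae hWc), setIntegral_const, smul_eq_mul, measureReal_def]
  have e4 : (P (S ∩ ζ)).toReal = (P S * P ζ).toReal := by
    rw [← e1, ← e2, e3, ENNReal.toReal_mul, ← hc, mul_comm]
  exact (ENNReal.toReal_eq_toReal_iff' (measure_ne_top P _)
    (ENNReal.mul_ne_top (measure_ne_top P _) (measure_ne_top P _))).mp e4
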